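/- Let γ > 0 and define the Huber function h_γ : ℝ → ℝ by h_γ(t) = γt²/2 if |t| ≤ 1/γ and h_γ(t) = |t| − 1/(2γ) if |t| > 1/γ. Then the map H : ℝ^m → ℝ, H(x) = Σ_{i=1}^n h_γ(⟨c_i, x⟩), is differentiable on ℝ^m and its gradient at x is ∇H(x) = Σ_{i=1}^n ( ⟨c_i, x⟩ / max(1/γ, |⟨c_i, x⟩|) ) c_iᵀ, i.e. ∇H(x) = Cᵀ v where vᵢ = ⟨c_i, x⟩ / max(1/γ, |⟨c_i, x⟩|). -/

import Mathlib

open Filter Topology Asymptotics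


/-- The scalar Huber function `h_γ`. -/
noncomputable def huber (γ t : ℝ) : ℝ :=
  if |t| ≤ 1 / γ then γ * t ^ 2 / 2 else |t| - 1 / (2 * γ)

lemma hasDerivAt_huber {γ : ℝ} (hγ : 0 < γ) (t : ℝ) :
    HasDerivAt (huber γ) (t / max (1 / γ) |t|) t := by
  have hγ' : 0 < 1 / γ := by positivity
  rcases lt_trichotomy |t| (1 / γ) with h | h | h
  · -- interior of quadratic region
    have hmax : max (1 / γ) |t| = 1 / γ := max_eq_left h.le
    have hval : t / max (1 / γ) |t| = γ * t := by
      rw [hmax]; field_simp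
    rw [hval]
    have hd : HasDerivAt (fun s : ℝ => γ * s ^ 2 / 2) (γ * t) t := by
      have := ((hasDerivAt_pow 2 t).const_mul γ).div_const 2
      refine this.congr_deriv ?_; norm_num; ring
    apply hd.congr_of_eventuallyEq
    have hev : ∀ᶠ s in 𝓝 t, |s| < 1 / γ :=
      (continuous_abs.continuousAt).eventually_lt continuousAt_const h
    filter_upwards [hev] with s hs
    rw [huber, if_pos hs.le]
  · -- boundary
    have ht0 : t ≠ 0 := by
      intro h0; rw [h0] at h; simp at h; linarith
    have hmax : max (1 / γ) |t| = 1 / γ := by rw [h, max_self]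
    have hval : t / max (1 / γ) |t| = γ * t := by
      rw [hmax]; field_simp
    rw [hval, hasDerivAt_iff_isLittleO]
    have ht2 : γ ^ 2 * t ^ 2 = 1 := by
      rw [← sq_abs t, h]; field_simp
    have hinv : (1 : ℝ) / (2 * γ) = γ * t ^ 2 / 2 := by
      rw [div_eq_div_iff (by positivity) (by norm_num : (2:ℝ) ≠ 0)]
      linear_combination (-2 : ℝ) * ht2
    have hubt : huber γ t = 1 / (2 * γ) := by
      rw [huber, if_pos h.le, hinv]
    have hO : (fun s : ℝ => huber γ s - huber γ t - (s - t) • (γ * t))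
        =O[𝓝 t] fun s => ‖s - t‖ ^ 2 := by
      rw [Asymptotics.isBigO_iff]
      refine ⟨γ / 2, ?_⟩
      have hev : ∀ᶠ s in 𝓝 t, |s - t| < |t| :=
        eventually_abs_sub_lt t (abs_pos.mpr ht0)
      filter_upwards [hev] with s hs
      have hst0 : 0 < s * t := by
        have h1 : |t * (s - t)| < |t| * |t| := by
          rw [abs_mul]
          exact mul_lt_mul_of_pos_left hs (abs_pos.mpr ht0)
        have h2 := neg_lt_of_abs_lt h1
        nlinarith [sq_abs t, abs_mul_abs_self t]
      rw [smul_eq_mul, hubt]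
      have hnorm : ‖‖s - t‖ ^ 2‖ = (s - t) ^ 2 := by
        rw [Real.norm_eq_abs, Real.norm_eq_abs, sq_abs, abs_of_nonneg (sq_nonneg _)]
      by_cases hsle : |s| ≤ 1 / γ
      · have hkey : huber γ s - 1 / (2 * γ) - (s - t) * (γ * t)
            = γ / 2 * (s - t) ^ 2 := by
          rw [huber, if_pos hsle, hinv]
          ring
        rw [hkey, hnorm, Real.norm_eq_abs, abs_of_nonneg (by positivity)]
      · have habs : |s| = s * t * γ := by
          have h3 : |s| * (1 / γ) = s * t := by
            rw [← h, ← abs_mul, abs_of_pos hst0]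
          have h4 := congrArg (fun z => z * γ) h3
          simpa [mul_assoc, one_div, inv_mul_cancel₀ (ne_of_gt hγ)] using h4
        have hkey : huber γ s - 1 / (2 * γ) - (s - t) * (γ * t) = 0 := by
          rw [huber, if_neg hsle, habs, hinv]
          ring
        rw [hkey, norm_zero, hnorm]
        positivity
    exact hO.trans_isLittleO (Asymptotics.isLittleO_pow_sub_sub t one_lt_two)
  · -- linear region
    have ht0 : t ≠ 0 := by
      intro h0; rw [h0] at h; simp at h; linarith
    have hmax : max (1 / γ) |t| = |t| := max_eq_right h.le
    have hval : t / max (1 / γ) |t| = (SignType.sign t : ℝ) := by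
      rw [hmax]
      rcases ht0.lt_or_gt with h' | h'
      · rw [abs_of_neg h', sign_neg h']
        field_simp
        simp
      · rw [abs_of_pos h', sign_pos h']
        field_simp
        simp
    rw [hval]
    have hd : HasDerivAt (fun s : ℝ => |s| - 1 / (2 * γ))
        ((SignType.sign t : ℝ)) t := by
      simpa using (hasDerivAt_abs ht0).sub_const (1 / (2 * γ))
    apply hd.congr_of_eventuallyEq
    have hev : ∀ᶠ s in 𝓝 t, 1 / γ < |s| :=
      continuousAt_const.eventually_lt (continuous_abs.continuousAt) h
    filter_upwards [hev] with s hs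
    rw [huber, if_neg (not_le.mpr hs)]


/-- The Huber regularization `H(x) = Σᵢ h_γ(⟨cᵢ, x⟩)` of `‖C·‖₁` is
differentiable with gradient `∇H(x) = Cᵀ v`, `vᵢ = ⟨cᵢ,x⟩ / max(1/γ, |⟨cᵢ,x⟩|)`. -/
theorem stmt_6 (m n : ℕ) (C : Matrix (Fin n) (Fin m) ℝ) (γ : ℝ) (hγ : 0 < γ)
    (x : EuclideanSpace ℝ (Fin m)) :
    HasGradientAt (fun y : EuclideanSpace ℝ (Fin m) => ∑ i, huber γ (∑ j, C i j * y j))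
      (WithLp.toLp 2 (fun j => ∑ i, ((∑ k, C i k * x k) / max (1 / γ) |∑ k, C i k * x k|) * C i j) :
        EuclideanSpace ℝ (Fin m)) x := by
  classical
  rw [hasGradientAt_iff_hasFDerivAt]
  set c : Fin n → EuclideanSpace ℝ (Fin m) := fun i => WithLp.toLp 2 (fun j => C i j) with hc
  set d : Fin n → ℝ := fun i => (∑ k, C i k * x k) / max (1 / γ) |∑ k, C i k * x k| with hd
  have hinner : ∀ i (y : EuclideanSpace ℝ (Fin m)),
      (∑ j, C i j * y j) = inner ℝ (c i) y := by
    intro i y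
    simp [PiLp.inner_apply, hc, RCLike.inner_apply, mul_comm]
  have hF : HasFDerivAt
      (fun y : EuclideanSpace ℝ (Fin m) => ∑ i, huber γ (∑ j, C i j * y j))
      (∑ i, d i • (innerSL ℝ (c i))) x := by
    apply HasFDerivAt.fun_sum
    intro i _
    have h1 : HasFDerivAt (fun y : EuclideanSpace ℝ (Fin m) => ∑ j, C i j * y j)
        (innerSL ℝ (c i)) x := by
      simp only [hinner i]
      exact (innerSL ℝ (c i)).hasFDerivAt
    exact (hasDerivAt_huber hγ (∑ j, C i j * x j)).comp_hasFDerivAt x h1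
  refine hF.congr_fderiv ?_
  apply ContinuousLinearMap.ext
  intro y
  simp only [InnerProductSpace.toDual_apply_apply, PiLp.inner_apply, RCLike.inner_apply,
    ContinuousLinearMap.sum_apply, ContinuousLinearMap.coe_smul', Pi.smul_apply,
    innerSL_apply_apply, smul_eq_mul, conj_trivial]
  simp only [Finset.sum_mul, Finset.mul_sum]
  rw [Finset.sum_comm]
  refine Finset.sum_congr rfl fun i _ => Finset.sum_congr rfl fun j _ => ?_
  simp only [hc, hd]
  ring
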